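/- Let P be an n-dimensional lattice polytope. If n is odd and μ(P) > (n+1)/2, or if n is even and μ(P) ≥ (n+2)/2, then P is a nontrivial Cayley polytope, i.e., P has lattice width one. -/

import Mathlib

open scoped BigOperators Pointwise

noncomputable section

/-- Pairing `⟨a, x⟩ = ∑ aⱼ xⱼ` of an integer linear functional with a real point. -/
def ipair {n : ℕ} (a : Fin n → ℤ) (x : Fin n → ℝ) : ℝ := ∑ j, (a j : ℝ) * x j

/-- An integer vector is primitive if it is nonzero and not a nontrivial integer
multiple of another integer vector. -/
def IsPrimitive {n : ℕ} (a : Fin n → ℤ) : Prop :=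
  a ≠ 0 ∧ ∀ (k : ℤ) (b : Fin n → ℤ), a = k • b → IsUnit k

/-- The set of integer (lattice) points of `ℝⁿ`. -/
def IntPts (n : ℕ) : Set (Fin n → ℝ) := Set.range (fun z : Fin n → ℤ => fun j => (z j : ℝ))

/-- The dimension of a subset of `ℝⁿ` (the dimension of its affine hull). -/
def setDim {n : ℕ} (S : Set (Fin n → ℝ)) : ℕ := Module.finrank ℝ (vectorSpan ℝ S)

/-- An irredundant facet description `P = {x : A x ≥ b}` of an `n`-dimensional
rational polytope: the rows `aᵢ` of `A` are primitive integer vectors, the right hand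
sides are rational, `P` is bounded and `n`-dimensional, every inequality defines a facet
(a face of dimension `n-1`), and no inequality is repeated. -/
structure PolyDesc (n m : ℕ) : Type where
  hm : 0 < m
  A : Fin m → Fin n → ℤ
  b : Fin m → ℚ
  prim : ∀ i, IsPrimitive (A i)
  bounded : Bornology.IsBounded {x : Fin n → ℝ | ∀ i, (b i : ℝ) ≤ ipair (A i) x}
  fulldim : setDim {x : Fin n → ℝ | ∀ i, (b i : ℝ) ≤ ipair (A i) x} = n
  facet_dim : ∀ i, setDim {x : Fin n → ℝ |
      (∀ j, (b j : ℝ) ≤ ipair (A j) x) ∧ ipair (A i) x = (b i : ℝ)} + 1 = n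
  irredundant : Function.Injective (fun i => (A i, b i))

namespace PolyDesc

variable {n m : ℕ} (D : PolyDesc n m)

/-- The polytope `P` itself. -/
def pts : Set (Fin n → ℝ) := {x | ∀ i, (D.b i : ℝ) ≤ ipair (D.A i) x}

/-- Lattice distance `d_{Fᵢ}(x) = ⟨aᵢ, x⟩ - bᵢ` from (the hyperplane spanned by)
the `i`-th facet. -/
def dF (i : Fin m) (x : Fin n → ℝ) : ℝ := ipair (D.A i) x - (D.b i : ℝ)

/-- Lattice distance `d_P(x) = minᵢ d_{Fᵢ}(x)` from the boundary of `P`. -/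
def dist (x : Fin n → ℝ) : ℝ :=
  Finset.univ.inf'
    (Finset.univ_nonempty_iff.mpr (Fin.pos_iff_nonempty.mp D.hm))
    (fun i => D.dF i x)

/-- The adjoint polytope `P⁽ˢ⁾ = {x : d_P(x) ≥ s}`. -/
def adj (s : ℝ) : Set (Fin n → ℝ) := {x | s ≤ D.dist x}

/-- The `i`-th facet `Fᵢ` of `P`. -/
def facet (i : Fin m) : Set (Fin n → ℝ) := {x ∈ D.pts | ipair (D.A i) x = (D.b i : ℝ)}

/-- The set `{s > 0 : P⁽ˢ⁾ ≠ ∅}`, whose supremum is `μ(P)⁻¹`. -/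
def qcdInvSet : Set ℝ := {s : ℝ | 0 < s ∧ (D.adj s).Nonempty}

/-- `μ(P)⁻¹ = sup {s > 0 : P⁽ˢ⁾ ≠ ∅}`. -/
def qcdInv : ℝ := sSup D.qcdInvSet

/-- The ℚ-codegree `μ(P) = (sup {s > 0 : P⁽ˢ⁾ ≠ ∅})⁻¹`. -/
def qcd : ℝ := D.qcdInv⁻¹

/-- The core `core(P) = P^{(1/μ(P))}`. -/
def core : Set (Fin n → ℝ) := D.adj D.qcdInv

/-- The codegree `cd(P) = min {k ∈ ℕ, k ≥ 1 : int(kP) ∩ ℤⁿ ≠ ∅}`. -/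
def codeg : ℕ := sInf {k : ℕ | 0 < k ∧
  ∃ z : Fin n → ℤ, (fun j => (z j : ℝ)) ∈ interior ((k : ℝ) • D.pts)}

end PolyDesc

/-- The face of `S` on which the linear functional `u` is maximized. -/
def argFace {n : ℕ} (S : Set (Fin n → ℝ)) (u : Fin n → ℝ) : Set (Fin n → ℝ) :=
  {x ∈ S | ∀ y ∈ S, ∑ j, u j * y j ≤ ∑ j, u j * x j}

/-- `S` and `T` have the same normal fan: two linear functionals lie in the same
(relatively open) cone of the normal fan of `S`, i.e. are maximized on the same face
of `S`, iff the same holds for `T`. -/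
def SameNormalFan {n : ℕ} (S T : Set (Fin n → ℝ)) : Prop :=
  ∀ u v : Fin n → ℝ, (argFace S u = argFace S v ↔ argFace T u = argFace T v)

/-- The normal fan of `S` refines the normal fan of `T`. -/
def RefinesNormalFan {n : ℕ} (S T : Set (Fin n → ℝ)) : Prop :=
  ∀ u v : Fin n → ℝ, argFace S u = argFace S v → argFace T u = argFace T v

namespace PolyDesc
variable {n m : ℕ} (D : PolyDesc n m)

/-- `{s > 0 : N(P⁽ˢ⁾) = N(P)}`, whose supremum is `τ(P)⁻¹`. -/
def nefInvSet : Set ℝ := {s : ℝ | 0 < s ∧ SameNormalFan (D.adj s) D.pts}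

/-- `τ(P)⁻¹ = sup {s > 0 : N(P⁽ˢ⁾) = N(P)}`. -/
def nefInv : ℝ := sSup D.nefInvSet

/-- The nef value `τ(P)`. -/
def nefVal : ℝ := D.nefInv⁻¹

/-- The set of inequalities active at `x`; the normal cone of the minimal face of `P`
containing `x` is generated by `{aᵢ : i ∈ active x}`, and all cones of the normal fan
of `P` arise in this way. -/
def active (x : Fin n → ℝ) : Set (Fin m) := {i | ipair (D.A i) x = (D.b i : ℝ)}

/-- The normal cone at the vertex `v` is ℚ-Gorenstein of index `r`, witnessed by the
primitive lattice point `u = u_σ` with `⟨aᵢ, u⟩ = r` for all active `i`. -/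
def VertexQG (v : Fin n → ℝ) (u : Fin n → ℤ) (r : ℤ) : Prop :=
  IsPrimitive u ∧ 0 < r ∧ ∀ i ∈ D.active v, (∑ j, D.A i j * u j) = r

/-- The normal fan of `P` is ℚ-Gorenstein: every maximal cone (normal cone of a
vertex, i.e. of an extreme point) is ℚ-Gorenstein. -/
def QGorenstein : Prop := ∀ v ∈ Set.extremePoints ℝ D.pts, ∃ u r, D.VertexQG v u r

end PolyDesc

/-- The point `v(s) = v + (s/r_σ) • u_σ`. -/
def vmove {n : ℕ} (v : Fin n → ℝ) (s : ℝ) (u : Fin n → ℤ) (r : ℤ) : Fin n → ℝ :=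
  v + (s / (r : ℝ)) • (fun j => ((u j : ℝ)))

/-- The height of a point `y` in the cone generated by `{aᵢ : i ∈ I}`:
`ht(y) = max {∑ λᵢ : λᵢ ≥ 0, ∑ λᵢ aᵢ = y}`. -/
def coneHeight {n m : ℕ} (D : PolyDesc n m) (I : Set (Fin m)) (y : Fin n → ℝ) : ℝ :=
  sSup {t : ℝ | ∃ c : Fin m → ℝ, (∀ i, 0 ≤ c i) ∧ (∀ i ∉ I, c i = 0) ∧
    (y = ∑ i, c i • (fun j => ((D.A i j : ℝ)))) ∧ t = ∑ i, c i}

/-- `P` is α-canonical: for every cone `σ` of the normal fan of `P` (the normal cone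
of the minimal face containing a point `x ∈ P`, generated by `{aᵢ : i ∈ active x}`),
every nonzero lattice point of `σ` has height at least `α`. -/
def AlphaCanonical {n m : ℕ} (D : PolyDesc n m) (α : ℝ) : Prop :=
  ∀ x ∈ D.pts, ∀ z : Fin n → ℤ, z ≠ 0 →
    (∃ c : Fin m → ℝ, (∀ i, 0 ≤ c i) ∧ (∀ i ∉ D.active x, c i = 0) ∧
      ((fun j => ((z j : ℝ))) = ∑ i, c i • (fun j => ((D.A i j : ℝ))))) →
    α ≤ coneHeight D (D.active x) (fun j => ((z j : ℝ)))

/-- `P` is a lattice polytope: the convex hull of finitely many integer points. -/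
def IsLatticePoly {n : ℕ} (P : Set (Fin n → ℝ)) : Prop :=
  ∃ V : Finset (Fin n → ℤ),
    P = convexHull ℝ ((fun z : Fin n → ℤ => fun j => ((z j : ℝ))) '' (V : Set (Fin n → ℤ)))

/-- The `i`-th standard basis vector of `ℝᵗ`. -/
def stdBasisVec (t : ℕ) (i : Fin t) : Fin t → ℝ := fun j => if j = i then 1 else 0

/-- The marking vectors of a Cayley sum: `0, e₁, …, e_t ∈ ℝᵗ`. -/
def cayleyVec (t : ℕ) : Fin (t + 1) → (Fin t → ℝ) :=
  fun j => if h : (j : ℕ) = 0 then 0 else stdBasisVec t ⟨(j : ℕ) - 1, by have := j.isLt; omega⟩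

/-- The Cayley sum `Q₀ * ⋯ * Q_t = conv((Q₀ × {0}) ∪ (Q₁ × {e₁}) ∪ ⋯ ∪ (Q_t × {e_t}))`. -/
def cayleySum {k t : ℕ} (Q : Fin (t + 1) → Set (Fin k → ℝ)) :
    Set ((Fin k → ℝ) × (Fin t → ℝ)) :=
  convexHull ℝ (⋃ j, (Q j) ×ˢ ({cayleyVec t j} : Set (Fin t → ℝ)))

/-- `P ⊆ ℝⁿ` is a Cayley polytope `P₀ * ⋯ * P_t` of length `t+1` of lattice polytopes
`Pⱼ ⊆ ℝᵏ` with `k + t = n`: some affine lattice isomorphism `ℤⁿ ≅ ℤᵏ × ℤᵗ`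
identifies `P` with such a Cayley sum. -/
def IsCayley {n : ℕ} (P : Set (Fin n → ℝ)) (k t : ℕ) : Prop :=
  k + t = n ∧
  ∃ Q : Fin (t + 1) → Finset (Fin k → ℤ), (∀ j, (Q j).Nonempty) ∧
  ∃ f : (Fin n → ℝ) ≃ᵃ[ℝ] (Fin k → ℝ) × (Fin t → ℝ),
    f '' IntPts n = (IntPts k) ×ˢ (IntPts t) ∧
    f '' P = cayleySum (fun j =>
      convexHull ℝ ((fun z : Fin k → ℤ => fun i => ((z i : ℝ))) '' (Q j : Set (Fin k → ℤ))))

/-- The unimodular simplex `Δₙ = conv(0, e₁, …, eₙ)`. -/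
def unimodSimplex (n : ℕ) : Set (Fin n → ℝ) :=
  convexHull ℝ (insert (0 : Fin n → ℝ) (Set.range (stdBasisVec n)))

/-- Two subsets of `ℝⁿ` are unimodularly equivalent: an affine lattice automorphism
maps one onto the other. -/
def UnimodEquiv {n : ℕ} (P P' : Set (Fin n → ℝ)) : Prop :=
  ∃ f : (Fin n → ℝ) ≃ᵃ[ℝ] (Fin n → ℝ), f '' IntPts n = IntPts n ∧ f '' P = P'

/-- The codegree `cd(P) = min {k ∈ ℕ, k ≥ 1 : int(kP) ∩ ℤⁿ ≠ ∅}` of a polytope given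
as a set. -/
def codegS {n : ℕ} (P : Set (Fin n → ℝ)) : ℕ :=
  sInf {k : ℕ | 0 < k ∧ ∃ z : Fin n → ℤ, (fun j => (z j : ℝ)) ∈ interior ((k : ℝ) • P)}

/-- `P` has lattice width one: some nonzero integer linear functional has minimum `c`
and maximum `c + 1` on `P`. -/
def HasLatticeWidthOne {n : ℕ} (P : Set (Fin n → ℝ)) : Prop :=
  ∃ u : Fin n → ℤ, u ≠ 0 ∧ ∃ c : ℤ,
    (∀ x ∈ P, (c : ℝ) ≤ ipair u x ∧ ipair u x ≤ (c : ℝ) + 1) ∧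
    (∃ x ∈ P, ipair u x = (c : ℝ)) ∧ (∃ x ∈ P, ipair u x = (c : ℝ) + 1)

/-- `P` is a lattice pyramid: for some primitive `u`, `P` is the convex hull of a base
lying in the lattice hyperplane `{⟨u, ·⟩ = c}` and an apex at lattice distance one from
it (this is equivalent to being unimodularly equivalent to
`conv((Q × {0}) ∪ {(0, …, 0, 1)})` for an `(n-1)`-dimensional lattice polytope `Q`). -/
def IsLatticePyramid {n : ℕ} (P : Set (Fin n → ℝ)) : Prop :=
  ∃ u : Fin n → ℤ, IsPrimitive u ∧ ∃ c : ℤ, ∃ apex ∈ P,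
    ipair u apex = (c : ℝ) + 1 ∧
    P = convexHull ℝ ({x ∈ P | ipair u x = (c : ℝ)} ∪ {apex})

/-- `F` is a facet of `S`: an exposed face of dimension `dim S - 1`. -/
def IsFacetOf {n : ℕ} (F S : Set (Fin n → ℝ)) : Prop :=
  IsExposed ℝ S F ∧ F.Nonempty ∧ setDim F + 1 = setDim S


section AuxStatement16

variable {n m : ℕ}

lemma ipair_continuous (a : Fin n → ℤ) : Continuous (ipair a) := by
  unfold ipair
  exact continuous_finset_sum _ fun j _ => continuous_const.mul (continuous_apply j)

lemma ipair_add (a : Fin n → ℤ) (x y : Fin n → ℝ) :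
    ipair a (x + y) = ipair a x + ipair a y := by
  unfold ipair
  rw [← Finset.sum_add_distrib]
  refine Finset.sum_congr rfl fun j _ => ?_
  simp [mul_add]

lemma ipair_smul (a : Fin n → ℤ) (t : ℝ) (x : Fin n → ℝ) :
    ipair a (t • x) = t * ipair a x := by
  unfold ipair
  rw [Finset.mul_sum]
  refine Finset.sum_congr rfl fun j _ => ?_
  simp [smul_eq_mul]; ring

lemma ipair_sub (a : Fin n → ℤ) (x y : Fin n → ℝ) :
    ipair a (x - y) = ipair a x - ipair a y := by
  unfold ipair
  rw [← Finset.sum_sub_distrib]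
  refine Finset.sum_congr rfl fun j _ => ?_
  simp [mul_sub]

/-- ipair as a linear map. -/
def ipairLM (a : Fin n → ℤ) : (Fin n → ℝ) →ₗ[ℝ] ℝ where
  toFun := ipair a
  map_add' := ipair_add a
  map_smul' := ipair_smul a

lemma ipair_single (a : Fin n → ℤ) (j : Fin n) :
    ipair a (fun j' => if j' = j then (1:ℝ) else 0) = (a j : ℝ) := by
  unfold ipair
  rw [Finset.sum_eq_single j]
  · simp
  · intro b _ hb; simp [hb]
  · simp

lemma setDim_lt_of_const {S : Set (Fin n → ℝ)} {u : Fin n → ℤ} (hu : u ≠ 0) {c : ℝ}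
    (hS : ∀ x ∈ S, ipair u x = c) (hn : 0 < n) : setDim S < n := by
  classical
  obtain ⟨j, hj⟩ : ∃ j, u j ≠ 0 := by
    by_contra hc; push_neg at hc; exact hu (funext hc)
  have hker : vectorSpan ℝ S ≤ LinearMap.ker (ipairLM u) := by
    rw [vectorSpan_def, Submodule.span_le]
    rintro v ⟨x, hx, y, hy, rfl⟩
    have : ipairLM u (x -ᵥ y) = 0 := by
      show ipair u (x - y) = 0
      rw [ipair_sub, hS x hx, hS y hy, sub_self]
    exact this
  have hkt : LinearMap.ker (ipairLM u) < ⊤ := by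
    rw [lt_top_iff_ne_top]
    intro htop
    have : ipairLM u (fun j' => if j' = j then (1:ℝ) else 0) = 0 := by
      have : (fun j' => if j' = j then (1:ℝ) else 0) ∈ LinearMap.ker (ipairLM u) := by
        rw [htop]; trivial
      exact this
    rw [show ipairLM u (fun j' => if j' = j then (1:ℝ) else 0)
        = ipair u (fun j' => if j' = j then (1:ℝ) else 0) from rfl, ipair_single] at this
    exact hj (by exact_mod_cast this)
  have h1 : setDim S ≤ Module.finrank ℝ (LinearMap.ker (ipairLM u)) :=
    Submodule.finrank_mono hker
  have h2 : Module.finrank ℝ (LinearMap.ker (ipairLM u)) < Module.finrank ℝ (Fin n → ℝ) :=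
    Submodule.finrank_lt hkt.ne
  have h3 : Module.finrank ℝ (Fin n → ℝ) = n := by
    simp [Module.finrank_pi]
  omega

namespace PolyDesc

lemma mem_pts_iff (D : PolyDesc n m) (x : Fin n → ℝ) :
    x ∈ D.pts ↔ ∀ i, ((D.b i : ℝ)) ≤ ipair (D.A i) x := Iff.rfl

lemma dF_nonneg (D : PolyDesc n m) {x : Fin n → ℝ} (hx : x ∈ D.pts) (i : Fin m) :
    0 ≤ D.dF i x := sub_nonneg.mpr (hx i)

lemma dist_le_dF (D : PolyDesc n m) (x : Fin n → ℝ) (i : Fin m) :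
    D.dist x ≤ D.dF i x := Finset.inf'_le _ (Finset.mem_univ i)

lemma isClosed_pts (D : PolyDesc n m) : IsClosed D.pts := by
  have : D.pts = ⋂ i, (ipair (D.A i)) ⁻¹' Set.Ici ((D.b i : ℝ)) := by
    ext x; simp [PolyDesc.pts, Set.mem_iInter]
  rw [this]
  exact isClosed_iInter fun i => (isClosed_Ici).preimage (ipair_continuous _)

lemma isCompact_pts (D : PolyDesc n m) : IsCompact D.pts :=
  Metric.isCompact_of_isClosed_isBounded D.isClosed_pts D.bounded

lemma nonempty_pts (D : PolyDesc n m) (hn : 0 < n) : D.pts.Nonempty := by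
  by_contra hc
  rw [Set.not_nonempty_iff_eq_empty] at hc
  have := D.fulldim
  rw [show {x : Fin n → ℝ | ∀ i, ((D.b i : ℝ)) ≤ ipair (D.A i) x} = D.pts from rfl, hc] at this
  unfold setDim at this
  rw [vectorSpan_empty] at this
  simp at this
  omega

lemma continuous_dist (D : PolyDesc n m) : Continuous D.dist := by
  have hne : (Finset.univ : Finset (Fin m)).Nonempty :=
    Finset.univ_nonempty_iff.mpr (Fin.pos_iff_nonempty.mp D.hm)
  refine continuous_iff_continuousAt.2 fun x => ?_
  have : ContinuousAt (fun a => Finset.univ.inf' hne (fun i => D.dF i a)) x :=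
    ContinuousAt.finset_inf'_apply hne fun i _ =>
      ((ipair_continuous (D.A i)).sub continuous_const).continuousAt
  exact this

/-- The key geometric lemma: if `μ(P)⁻¹ < 2/(n+1)` then some facet functional has
width less than `2` on `P`. -/
lemma key (D : PolyDesc n m) (hn : 0 < n) (hq : D.qcdInv < 2 / ((n : ℝ) + 1)) :
    ∃ i₀ : Fin m, ∀ x ∈ D.pts, D.dF i₀ x < 2 := by
  classical
  have hne : (Finset.univ : Finset (Fin m)).Nonempty :=
    Finset.univ_nonempty_iff.mpr (Fin.pos_iff_nonempty.mp D.hm)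
  obtain ⟨xs, hxs, hmax⟩ :=
    D.isCompact_pts.exists_isMaxOn (D.nonempty_pts hn) D.continuous_dist.continuousOn
  set s : ℝ := D.dist xs with hsdef
  have hdistle : ∀ i, s ≤ D.dF i xs := fun i => D.dist_le_dF xs i
  have hs0 : 0 ≤ s := by
    rw [hsdef]
    unfold PolyDesc.dist
    rw [Finset.le_inf'_iff]
    exact fun i _ => D.dF_nonneg hxs i
  have hnp : (0:ℝ) < (n:ℝ) + 1 := by positivity
  have hslt : s < 2 / ((n:ℝ) + 1) := by
    rcases eq_or_lt_of_le hs0 with h0 | hpos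
    · rw [← h0]; positivity
    · refine lt_of_le_of_lt ?_ hq
      apply le_csSup
      · refine ⟨s, ?_⟩
        rintro t ⟨ht0, y, hy⟩
        have hyP : y ∈ D.pts := by
          intro i
          have h1 : t ≤ D.dF i y := le_trans hy (D.dist_le_dF y i)
          have : (0:ℝ) < D.dF i y := lt_of_lt_of_le ht0 h1
          unfold PolyDesc.dF at this
          linarith
        exact le_trans hy (hmax hyP)
      · exact ⟨hpos, xs, le_of_eq hsdef⟩
  -- 0 is in the convex hull of the active normals
  set av : Fin m → (Fin n → ℝ) := fun i j => ((D.A i j : ℝ)) with havdef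
  set T : Set (Fin n → ℝ) := av '' {i | D.dF i xs = s} with hTdef
  have hTfin : T.Finite := Set.Finite.image _ (Set.toFinite _)
  have h0T : (0 : Fin n → ℝ) ∈ convexHull ℝ T := by
    by_contra h0
    obtain ⟨f, u, hfu, hK⟩ := _root_.geometric_hahn_banach_point_closed
      (convex_convexHull ℝ T) (hTfin.isCompact_convexHull (𝕜 := ℝ)).isClosed h0
    have hu0 : 0 < u := by simpa using hfu
    set d : Fin n → ℝ := fun j => f (fun j' => if j = j' then (1:ℝ) else 0) with hddef
    have hip : ∀ w : Fin n → ℝ, (∑ j, w j * d j) = f w := by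
      intro w
      conv_rhs => rw [pi_eq_sum_univ w, map_sum]
      refine Finset.sum_congr rfl fun j _ => ?_
      rw [map_smul, smul_eq_mul]
    have hipair : ∀ i : Fin m, ipair (D.A i) d = f (av i) := by
      intro i
      rw [← hip]
      rfl
    -- choose a small step
    set g : Fin m → ℝ := fun i =>
      if D.dF i xs ≤ s then 1 else (D.dF i xs - s) / (1 + |ipair (D.A i) d|) with hgdef
    have hgpos : ∀ i, 0 < g i := by
      intro i
      rw [hgdef]
      by_cases hi : D.dF i xs ≤ s
      · simp [hi]
      · simp only [hi, if_false]
        push_neg at hi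
        have : (0:ℝ) < 1 + |ipair (D.A i) d| := by positivity
        exact div_pos (by linarith) this
    set δ : ℝ := Finset.univ.inf' hne g with hδdef
    have hδpos : 0 < δ := by
      rw [hδdef, Finset.lt_inf'_iff]
      exact fun i _ => hgpos i
    have hδle : ∀ i, δ ≤ g i := fun i => Finset.inf'_le _ (Finset.mem_univ i)
    set ε : ℝ := δ / 2 with hεdef
    have hεpos : 0 < ε := by positivity
    set z : Fin n → ℝ := xs + ε • d with hzdef
    have hdFz : ∀ i, D.dF i z = D.dF i xs + ε * ipair (D.A i) d := by
      intro i
      unfold PolyDesc.dF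
      rw [hzdef, ipair_add, ipair_smul]
      ring
    have hall : ∀ i, s < D.dF i z := by
      intro i
      rw [hdFz]
      by_cases hi : D.dF i xs ≤ s
      · have hieq : D.dF i xs = s := le_antisymm hi (hdistle i)
        have hmem : av i ∈ T := ⟨i, hieq, rfl⟩
        have : u < f (av i) := hK _ (subset_convexHull ℝ T hmem)
        rw [hieq, hipair i]
        nlinarith
      · push_neg at hi
        have hg : g i = (D.dF i xs - s) / (1 + |ipair (D.A i) d|) := by
          rw [hgdef]; simp [not_le.mpr hi]
        have hden : (0:ℝ) < 1 + |ipair (D.A i) d| := by positivity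
        have h1 : ε * (1 + |ipair (D.A i) d|) < D.dF i xs - s := by
          have h2 : δ ≤ (D.dF i xs - s) / (1 + |ipair (D.A i) d|) := hg ▸ hδle i
          have h3 : δ * (1 + |ipair (D.A i) d|) ≤ D.dF i xs - s := by
            rw [← le_div_iff₀ hden]; exact h2
          have : ε * (1 + |ipair (D.A i) d|) < δ * (1 + |ipair (D.A i) d|) := by
            apply mul_lt_mul_of_pos_right _ hden
            rw [hεdef]; linarith
          linarith
        have h4 : -(ε * |ipair (D.A i) d|) ≤ ε * ipair (D.A i) d := by
          have := neg_abs_le (ipair (D.A i) d)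
          nlinarith
        nlinarith [abs_nonneg (ipair (D.A i) d)]
    have hzP : z ∈ D.pts := by
      intro i
      have := hall i
      unfold PolyDesc.dF at this
      linarith
    have hzd : s < D.dist z := by
      unfold PolyDesc.dist
      rw [Finset.lt_inf'_iff]
      exact fun i _ => hall i
    exact absurd (hmax hzP) (not_le.mpr hzd)
  -- Carathéodory
  obtain ⟨ι, hι, zv, w, hrange, haff, hwpos, hwsum, hwz⟩ :=
    eq_pos_convex_span_of_mem_convexHull h0T
  have hcard : Fintype.card ι ≤ n + 1 := by
    have h1 := haff.card_le_finrank_succ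
    have h2 : Module.finrank ℝ (vectorSpan ℝ (Set.range zv)) ≤ n := by
      have := Submodule.finrank_le (vectorSpan ℝ (Set.range zv))
      simpa [Module.finrank_pi] using this
    omega
  -- choose facet indices
  have hchoice : ∀ i : ι, ∃ k : Fin m, D.dF k xs = s ∧ av k = zv i := by
    intro i
    have : zv i ∈ T := hrange (Set.mem_range_self i)
    obtain ⟨k, hk1, hk2⟩ := this
    exact ⟨k, hk1, hk2⟩
  choose gi hgi1 hgi2 using hchoice
  -- the weighted sum of facet distances is constant = s on pts
  have hconst : ∀ x ∈ D.pts, (∑ i, w i * D.dF (gi i) x) = s := by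
    intro x hx
    have hdiff : (∑ i, w i * D.dF (gi i) x) - (∑ i, w i * D.dF (gi i) xs) = 0 := by
      rw [← Finset.sum_sub_distrib]
      have : ∀ i : ι, w i * D.dF (gi i) x - w i * D.dF (gi i) xs
          = ∑ j, (w i * zv i j) * (x j - xs j) := by
        intro i
        unfold PolyDesc.dF
        rw [← mul_sub]
        have hips : ipair (D.A (gi i)) x - ipair (D.A (gi i)) xs
            = ∑ j, zv i j * (x j - xs j) := by
          rw [← ipair_sub]
          unfold ipair
          refine Finset.sum_congr rfl fun j _ => ?_
          rw [← hgi2 i]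
          simp [havdef]
        rw [show ipair (D.A (gi i)) x - ((D.b (gi i) : ℝ)) - (ipair (D.A (gi i)) xs - ((D.b (gi i) : ℝ)))
            = ipair (D.A (gi i)) x - ipair (D.A (gi i)) xs by ring, hips, Finset.mul_sum]
        refine Finset.sum_congr rfl fun j _ => ?_
        ring
      rw [Finset.sum_congr rfl fun i _ => this i, Finset.sum_comm]
      have hzero : ∀ j : Fin n, (∑ i, (w i * zv i j) * (x j - xs j)) = 0 := by
        intro j
        rw [← Finset.sum_mul]
        have : (∑ i, w i * zv i j) = 0 := by
          have := congrFun hwz j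
          simpa [Finset.sum_apply, smul_eq_mul] using this
        rw [this, zero_mul]
      rw [Finset.sum_congr rfl fun j _ => hzero j, Finset.sum_const, smul_zero]
    have hxs' : (∑ i, w i * D.dF (gi i) xs) = s := by
      have : ∀ i : ι, w i * D.dF (gi i) xs = w i * s := fun i => by rw [hgi1 i]
      rw [Finset.sum_congr rfl fun i _ => this i, ← Finset.sum_mul, hwsum, one_mul]
    linarith
  -- some weight is large
  have hbig : ∃ i : ι, s < 2 * w i := by
    by_contra hc
    push_neg at hc
    have h1 : (2:ℝ) = ∑ i, 2 * w i := by rw [← Finset.mul_sum, hwsum, mul_one]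
    have h2 : (∑ i, 2 * w i) ≤ ∑ _i : ι, s := Finset.sum_le_sum fun i _ => hc i
    have h3 : (∑ _i : ι, s) = (Fintype.card ι : ℝ) * s := by
      rw [Finset.sum_const, nsmul_eq_mul]
      rfl
    have h4 : (Fintype.card ι : ℝ) * s ≤ ((n:ℝ) + 1) * s := by
      apply mul_le_mul_of_nonneg_right _ hs0
      exact_mod_cast hcard
    have h5 : ((n:ℝ) + 1) * s < 2 := by
      have := (lt_div_iff₀ hnp).mp hslt
      linarith
    linarith
  obtain ⟨i₀, hi₀⟩ := hbig
  have hw0 : 0 < w i₀ := by linarith [hwpos i₀, hs0]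
  refine ⟨gi i₀, fun x hx => ?_⟩
  have hsingle : w i₀ * D.dF (gi i₀) x ≤ ∑ i, w i * D.dF (gi i) x := by
    apply Finset.single_le_sum (f := fun i => w i * D.dF (gi i) x)
    · exact fun i _ => mul_nonneg (le_of_lt (hwpos i)) (D.dF_nonneg hx (gi i))
    · exact Finset.mem_univ i₀
  rw [hconst x hx] at hsingle
  nlinarith

end PolyDesc

end AuxStatement16

/-- Let `P` be an `n`-dimensional lattice polytope. If `n` is odd
and `μ(P) > (n+1)/2`, or `n` is even and `μ(P) ≥ (n+2)/2`, then `P` is a nontrivial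
Cayley polytope, i.e. `P` has lattice width one. -/
theorem statement16 {n m : ℕ} (D : PolyDesc n m) (hlat : IsLatticePoly D.pts)
    (h : (Odd n ∧ ((n : ℝ) + 1) / 2 < D.qcd) ∨ (Even n ∧ ((n : ℝ) + 2) / 2 ≤ D.qcd)) :
    HasLatticeWidthOne D.pts := by
  classical
  rcases Nat.eq_zero_or_pos n with hn0 | hn
  · exfalso
    subst hn0
    exact (D.prim ⟨0, D.hm⟩).1 (funext fun j => j.elim0)
  have hqpos : ((n:ℝ) + 1) / 2 < D.qcd := by
    rcases h with ⟨_, h⟩ | ⟨_, h⟩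
    · exact h
    · refine lt_of_lt_of_le ?_ h
      have : (1:ℝ) ≤ (n:ℝ) := by exact_mod_cast hn
      linarith
  have hq : D.qcdInv < 2 / ((n:ℝ) + 1) := by
    have hnp : (0:ℝ) < (n:ℝ) + 1 := by positivity
    rcases le_or_gt D.qcdInv 0 with h0 | h0
    · calc D.qcdInv ≤ 0 := h0
        _ < 2 / ((n:ℝ) + 1) := by positivity
    · have h1 : ((n:ℝ) + 1) / 2 < (D.qcdInv)⁻¹ := hqpos
      have h2 : D.qcdInv * (((n:ℝ) + 1) / 2) < D.qcdInv * (D.qcdInv)⁻¹ :=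
        mul_lt_mul_of_pos_left h1 h0
      rw [mul_inv_cancel₀ (ne_of_gt h0)] at h2
      rw [lt_div_iff₀ hnp]
      nlinarith
  obtain ⟨i₀, hi₀⟩ := D.key hn hq
  obtain ⟨V, hV⟩ := hlat
  set u := D.A i₀ with hudef
  have hu0 : u ≠ 0 := (D.prim i₀).1
  have hPne : D.pts.Nonempty := D.nonempty_pts hn
  have hVne : V.Nonempty := by
    by_contra hc
    rw [Finset.not_nonempty_iff_eq_empty] at hc
    rw [hc] at hV
    simp only [Finset.coe_empty, Set.image_empty, convexHull_empty] at hV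
    rw [hV] at hPne
    exact Set.not_nonempty_empty hPne
  set val : (Fin n → ℤ) → ℤ := fun z => ∑ j, u j * z j with hvaldef
  have hvalcast : ∀ z : Fin n → ℤ, ipair u (fun j => ((z j : ℝ))) = ((val z : ℤ) : ℝ) := by
    intro z
    unfold ipair
    rw [hvaldef]
    push_cast
    rfl
  have hmemP : ∀ z ∈ V, (fun j => ((z j : ℝ))) ∈ D.pts := by
    intro z hz
    rw [hV]
    exact subset_convexHull ℝ _ ⟨z, hz, rfl⟩
  set k : ℤ := (V.image val).min' (hVne.image val) with hkdef
  obtain ⟨z₀, hz₀V, hz₀⟩ := Finset.mem_image.mp ((V.image val).min'_mem (hVne.image val))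
  have hkle : ∀ z ∈ V, k ≤ val z := fun z hz =>
    Finset.min'_le _ _ (Finset.mem_image_of_mem val hz)
  have hbk : ((D.b i₀ : ℝ)) ≤ (k:ℝ) := by
    have h1 := D.dF_nonneg (hmemP z₀ hz₀V) i₀
    unfold PolyDesc.dF at h1
    rw [show D.A i₀ = u from rfl, hvalcast z₀, hz₀] at h1
    linarith
  have hval2 : ∀ z ∈ V, val z = k ∨ val z = k + 1 := by
    intro z hz
    have h1 := hi₀ _ (hmemP z hz)
    unfold PolyDesc.dF at h1
    rw [show D.A i₀ = u from rfl, hvalcast z] at h1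
    have h2 : ((val z : ℤ):ℝ) < (k:ℝ) + 2 := by linarith
    have h3 : val z < k + 2 := by exact_mod_cast h2
    have h4 := hkle z hz
    omega
  by_cases hall : ∀ z ∈ V, val z = k
  · exfalso
    have hconst : ∀ x ∈ D.pts, ipair u x = (k:ℝ) := by
      intro x hx
      rw [hV] at hx
      have hcvx : Convex ℝ ((ipairLM u) ⁻¹' {((k:ℝ))}) :=
        (convex_singleton _).linear_preimage (ipairLM u)
      have hsub : ((fun z : Fin n → ℤ => fun j => ((z j : ℝ))) '' (V : Set (Fin n → ℤ)))
          ⊆ (ipairLM u) ⁻¹' {((k:ℝ))} := by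
        rintro _ ⟨z, hz, rfl⟩
        show ipair u (fun j => ((z j : ℝ))) ∈ ({((k:ℝ))} : Set ℝ)
        rw [hvalcast z, hall z hz]
        exact Set.mem_singleton _
      exact convexHull_min hsub hcvx hx
    have hlt := setDim_lt_of_const hu0 hconst hn
    have hdim : setDim D.pts = n := D.fulldim
    omega
  · push_neg at hall
    obtain ⟨z₁, hz₁V, hz₁⟩ := hall
    have hz₁k : val z₁ = k + 1 := by
      rcases hval2 z₁ hz₁V with h | h
      · exact absurd h hz₁
      · exact h
    refine ⟨u, hu0, k, ?_, ⟨_, hmemP z₀ hz₀V, by rw [hvalcast, hz₀]⟩,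
      ⟨_, hmemP z₁ hz₁V, by rw [hvalcast, hz₁k]; push_cast; ring⟩⟩
    intro x hx
    rw [hV] at hx
    have hcvx : Convex ℝ ((ipairLM u) ⁻¹' (Set.Icc ((k:ℝ)) ((k:ℝ) + 1))) :=
      (convex_Icc _ _).linear_preimage (ipairLM u)
    have hsub : ((fun z : Fin n → ℤ => fun j => ((z j : ℝ))) '' (V : Set (Fin n → ℤ)))
        ⊆ (ipairLM u) ⁻¹' (Set.Icc ((k:ℝ)) ((k:ℝ) + 1)) := by
      rintro _ ⟨z, hz, rfl⟩
      show ipair u (fun j => ((z j : ℝ))) ∈ Set.Icc ((k:ℝ)) ((k:ℝ) + 1)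
      rw [hvalcast z]
      rcases hval2 z hz with h | h
      · rw [h]
        exact ⟨le_refl _, by linarith⟩
      · rw [h]
        push_cast
        exact ⟨by linarith, le_refl _⟩
    have := convexHull_min hsub hcvx hx
    exact ⟨this.1, this.2⟩

end
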